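/- Define log₀ : ℂ∖{0} → ℂ by log₀(z) = ln|z| + i·arg₀(z) with arg₀(z) ∈ [0, 2π). Let h : [0,∞) → ℝ be continuously differentiable with h' continuous, bounded, and integrable on [0,∞). Define χ(k) := (1/(2πi)) ∫₀^∞ log₀(k − s)·h'(s) ds for k ∈ ℂ∖[0,∞), and χ(0) := (1/(2πi)) ∫₀^∞ (ln s + iπ)·h'(s) ds. Then for every θ₀ ∈ (0, π) there exists a constant C > 0 such that for all k with 0 < |k| ≤ 1/4 and θ₀ ≤ arg₀(k) ≤ 2π − θ₀, one has |χ(k) − χ(0)| ≤ C·|k|·(1 + |ln|k||). -/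

import Mathlib

open MeasureTheory Complex

/-- The argument normalized to `[0, 2π)`. -/
noncomputable def arg0 (z : ℂ) : ℝ :=
  if 0 ≤ Complex.arg z then Complex.arg z else Complex.arg z + 2 * Real.pi

/-- The logarithm `log₀` with branch cut along the positive real axis:
`log₀(z) = ln|z| + i·arg₀(z)` with `arg₀(z) ∈ [0, 2π)`. -/
noncomputable def log0 (z : ℂ) : ℂ :=
  (Real.log (‖z‖) : ℂ) + (arg0 z : ℂ) * Complex.I

/-! ### Auxiliary lemmas -/

lemma arg0_nonneg (z : ℂ) : 0 ≤ arg0 z := by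
  unfold arg0; split
  · assumption
  · nlinarith [Complex.neg_pi_lt_arg z, Real.pi_pos]

lemma arg0_lt_two_pi (z : ℂ) : arg0 z < 2 * Real.pi := by
  unfold arg0; split
  · nlinarith [Complex.arg_le_pi z, Real.pi_pos]
  · linarith [not_le.mp (by assumption : ¬ 0 ≤ Complex.arg z)]

lemma arg0_of_re_neg {z : ℂ} (hz : z.re < 0) :
    arg0 z = Real.pi - Real.arcsin (z.im / ‖z‖) := by
  have hneg : ((-z).im / ‖z‖) = -(z.im / ‖z‖) := by
    simp [neg_div]
  unfold arg0
  rcases le_or_gt 0 z.im with him | him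
  · rw [Complex.arg_of_re_neg_of_im_nonneg hz him, hneg, Real.arcsin_neg]
    rw [if_pos (by nlinarith [Real.neg_pi_div_two_le_arcsin (-(z.im / ‖z‖)),
      Real.arcsin_neg (z.im / ‖z‖), Real.pi_pos])]
    ring
  · have habs : 0 < ‖z‖ := by
      simp only [norm_pos_iff]; intro h; rw [h] at hz; simp at hz
    rw [Complex.arg_of_re_neg_of_im_neg hz him, hneg, Real.arcsin_neg]
    have h5 : Real.arcsin (z.im / ‖z‖) ≥ -(Real.pi/2) :=
      Real.neg_pi_div_two_le_arcsin _
    rw [if_neg (by push_neg; nlinarith [Real.pi_pos])]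
    ring

lemma abs_arcsin_le {t : ℝ} (ht : |t| ≤ 1) : |Real.arcsin t| ≤ Real.pi / 2 * |t| := by
  have key : ∀ u : ℝ, 0 ≤ u → u ≤ 1 → Real.arcsin u ≤ Real.pi / 2 * u := by
    intro u hu hu1
    have h0 : 0 ≤ Real.arcsin u := Real.arcsin_nonneg.2 hu
    have h2 := Real.mul_le_sin (x := Real.arcsin u) h0 (Real.arcsin_le_pi_div_two u)
    rw [Real.sin_arcsin (by linarith) hu1] at h2
    have hπ := Real.pi_pos
    rw [div_mul_eq_mul_div, div_le_iff₀ hπ] at h2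
    nlinarith
  rcases le_or_gt 0 t with h | h
  · rw [_root_.abs_of_nonneg h, _root_.abs_of_nonneg (Real.arcsin_nonneg.2 h)]
    exact key t h (by rwa [_root_.abs_of_nonneg h] at ht)
  · rw [_root_.abs_of_neg h, _root_.abs_of_nonpos (Real.arcsin_nonpos.2 h.le)]
    have := key (-t) (by linarith) (by rwa [_root_.abs_of_neg h] at ht)
    rw [Real.arcsin_neg] at this; linarith

lemma abs_log_le {x : ℝ} (hx : 1/2 ≤ x) : |Real.log x| ≤ 2 * |x - 1| := by
  rcases le_or_gt 1 x with h1 | h1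
  · rw [_root_.abs_of_nonneg (Real.log_nonneg h1), _root_.abs_of_nonneg (by linarith)]
    have := Real.log_le_sub_one_of_pos (by linarith : (0:ℝ) < x)
    linarith
  · have hx0 : (0:ℝ) < x := by linarith
    rw [_root_.abs_of_nonpos (Real.log_nonpos hx0.le h1.le), _root_.abs_of_neg (by linarith)]
    have h2 : Real.log x⁻¹ ≤ x⁻¹ - 1 := Real.log_le_sub_one_of_pos (by positivity)
    rw [Real.log_inv] at h2
    have h4 : x⁻¹ - 1 ≤ 2 * (1 - x) := by
      have : x⁻¹ * x = 1 := inv_mul_cancel₀ hx0.ne'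
      nlinarith [sq_nonneg (x⁻¹ - 2)]
    linarith

lemma abs_log_sub_log_le {s u r : ℝ} (hs : 0 < s) (hu : s/2 ≤ u) (hd : |u - s| ≤ r) :
    |Real.log u - Real.log s| ≤ 2 * r / s := by
  have hu0 : 0 < u := by linarith
  rw [show Real.log u - Real.log s = Real.log (u / s) from
    (Real.log_div hu0.ne' hs.ne').symm]
  have h1 : 1/2 ≤ u / s := by rw [le_div_iff₀ hs]; linarith
  have h3 := abs_log_le h1
  have h2 : |u / s - 1| = |u - s| / s := by
    rw [show u / s - 1 = (u - s)/s by field_simp, abs_div, _root_.abs_of_pos hs]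
  rw [h2] at h3
  calc |Real.log (u/s)| ≤ 2 * (|u - s| / s) := h3
    _ ≤ 2 * r / s := by rw [mul_div_assoc]; gcongr

lemma region_domain {θ₀ : ℝ} (hθ0 : 0 < θ₀) {k : ℂ} (hk : 0 < ‖k‖)
    (h1 : θ₀ ≤ arg0 k) : k.im ≠ 0 ∨ k.re < 0 := by
  by_contra hcon
  push_neg at hcon
  obtain ⟨him, hre⟩ := hcon
  have harg : Complex.arg k = 0 := Complex.arg_eq_zero_iff.2 ⟨hre, him⟩
  have : arg0 k = 0 := by unfold arg0; rw [harg]; simp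
  linarith

lemma dist_lower {θ₀ : ℝ} (hθ1 : 0 < θ₀) (hθ2 : θ₀ < Real.pi) {k : ℂ}
    (hk : 0 < ‖k‖) (h1 : θ₀ ≤ arg0 k) (h2 : arg0 k ≤ 2 * Real.pi - θ₀)
    {s : ℝ} (hs : 0 ≤ s) : Real.sin θ₀ * ‖k‖ ≤ ‖k - s‖ := by
  have hsin1 : Real.sin θ₀ ≤ 1 := Real.sin_le_one θ₀
  have hsinpos : 0 < Real.sin θ₀ := Real.sin_pos_of_pos_of_lt_pi hθ1 hθ2
  rcases le_or_gt k.re 0 with hre | hre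
  · have hsq : (‖k‖)^2 ≤ (‖k - s‖)^2 := by
      rw [Complex.sq_norm, Complex.sq_norm, Complex.normSq_apply, Complex.normSq_apply]
      simp only [Complex.sub_re, Complex.sub_im, Complex.ofReal_re, Complex.ofReal_im,
        sub_zero]
      nlinarith
    have h3 : ‖k‖ ≤ ‖k - s‖ := by
      nlinarith [norm_nonneg (k - s), norm_nonneg k]
    nlinarith
  · have hk0 : k ≠ 0 := by intro h; rw [h] at hre; simp at hre
    have hcos : 0 < Real.cos (Complex.arg k) := by
      rw [Complex.cos_arg hk0]; positivity
    have hlt : |Complex.arg k| < Real.pi / 2 := by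
      by_contra hcon
      push_neg at hcon
      have habs : |Complex.arg k| ≤ Real.pi :=
        abs_le.2 ⟨(Complex.neg_pi_lt_arg k).le, Complex.arg_le_pi k⟩
      have := Real.cos_nonpos_of_pi_div_two_le_of_le hcon
        (by nlinarith [Real.pi_pos])
      rw [Real.cos_abs] at this
      linarith
    have hsinarg : Real.sin θ₀ ≤ |Real.sin (Complex.arg k)| := by
      rcases le_or_gt 0 (Complex.arg k) with ha | ha
      · have he : arg0 k = Complex.arg k := by unfold arg0; rw [if_pos ha]
        have h4 : θ₀ ≤ Complex.arg k := he ▸ h1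
        have h5 : Real.sin θ₀ ≤ Real.sin (Complex.arg k) :=
          Real.sin_le_sin_of_le_of_le_pi_div_two (by linarith) (by
            rw [abs_lt] at hlt; linarith) h4
        rw [_root_.abs_of_nonneg (by linarith)]
        exact h5
      · have he : arg0 k = Complex.arg k + 2 * Real.pi := by
          unfold arg0; rw [if_neg (not_le.2 ha)]
        have h4 : θ₀ ≤ -Complex.arg k := by rw [he] at h2; linarith
        have h5 : Real.sin θ₀ ≤ Real.sin (-Complex.arg k) :=
          Real.sin_le_sin_of_le_of_le_pi_div_two (by linarith) (by
            rw [abs_lt] at hlt; linarith) h4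
        rw [Real.sin_neg] at h5
        rw [_root_.abs_of_nonpos (by linarith)]
        exact h5
    have him : |k.im| = |Real.sin (Complex.arg k)| * ‖k‖ := by
      have := Complex.sin_arg k
      rw [this, abs_div, _root_.abs_of_pos hk, div_mul_cancel₀]
      exact hk.ne'
    have h6 : |k.im| ≤ ‖k - s‖ := by
      have h7 : (k - (s:ℂ)).im = k.im := by simp
      have := Complex.abs_im_le_norm (k - s)
      rw [h7] at this; exact this
    calc Real.sin θ₀ * ‖k‖ ≤ |Real.sin (Complex.arg k)| * ‖k‖ := by
          gcongr
      _ = |k.im| := him.symm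
      _ ≤ ‖k - s‖ := h6

lemma f_re (k : ℂ) (s : ℝ) :
    (log0 (k - s) - ((Real.log s : ℂ) + Real.pi * Complex.I)).re
      = Real.log (‖k - s‖) - Real.log s := by
  simp [log0]

lemma f_im (k : ℂ) (s : ℝ) :
    (log0 (k - s) - ((Real.log s : ℂ) + Real.pi * Complex.I)).im
      = arg0 (k - s) - Real.pi := by
  simp [log0]

lemma abs_sandwich {k : ℂ} {s : ℝ} (hs0 : 0 < s) :
    |‖k - s‖ - s| ≤ ‖k‖ := by
  rw [abs_le]
  constructor
  · have h1 : ‖(s:ℂ)‖ ≤ ‖(s:ℂ) - k‖ + ‖k‖ := by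
      calc ‖(s:ℂ)‖ = ‖(s:ℂ) - k + k‖ := by ring_nf
        _ ≤ ‖(s:ℂ) - k‖ + ‖k‖ := norm_add_le _ _
    rw [Complex.norm_real, Real.norm_eq_abs, _root_.abs_of_pos hs0] at h1
    rw [norm_sub_rev k] at *
    linarith
  · have h2 : ‖k - s‖ ≤ ‖k‖ + ‖(s:ℂ)‖ := by
      calc ‖k - s‖ = ‖k + -(s:ℂ)‖ := by ring_nf
        _ ≤ ‖k‖ + ‖-(s:ℂ)‖ := norm_add_le _ _
        _ = ‖k‖ + ‖(s:ℂ)‖ := by rw [norm_neg]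
    rw [Complex.norm_real, Real.norm_eq_abs, _root_.abs_of_pos hs0] at h2
    linarith

lemma pointwise_far {k : ℂ} {s : ℝ} (hr0 : 0 < ‖k‖)
    (hs : 2 * ‖k‖ ≤ s) :
    ‖log0 (k - s) - ((Real.log s : ℂ) + Real.pi * Complex.I)‖
      ≤ 6 * ‖k‖ / s := by
  set r := ‖k‖ with hr
  have hs0 : 0 < s := by linarith
  have hsand : |‖k - s‖ - s| ≤ r := abs_sandwich hs0
  set u := ‖k - (s:ℂ)‖ with hu
  have hu_ge : s/2 ≤ u := by
    rw [abs_le] at hsand; linarith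
  have hu0 : 0 < u := by linarith
  have hzre : (k - (s:ℂ)).re < 0 := by
    have hkre : k.re ≤ r := le_trans (le_abs_self _) (Complex.abs_re_le_norm k)
    simp only [Complex.sub_re, Complex.ofReal_re]
    linarith
  have hRe : |Real.log u - Real.log s| ≤ 2 * r / s :=
    abs_log_sub_log_le hs0 hu_ge hsand
  have hIm : |arg0 (k - s) - Real.pi| ≤ Real.pi * r / s := by
    rw [arg0_of_re_neg hzre]
    have him : (k - (s:ℂ)).im = k.im := by simp
    have ht1 : |k.im / u| ≤ 1 := by
      rw [abs_div, _root_.abs_of_pos hu0, div_le_one hu0]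
      calc |k.im| = |(k - (s:ℂ)).im| := by rw [him]
        _ ≤ u := Complex.abs_im_le_norm _
    have h3 := abs_arcsin_le ht1
    have h4 : |k.im / u| ≤ 2 * r / s := by
      rw [abs_div, _root_.abs_of_pos hu0]
      have h5 : |k.im| ≤ r := Complex.abs_im_le_norm k
      calc |k.im| / u ≤ r / (s/2) := by gcongr
        _ = 2 * r / s := by ring
    have heq : Real.pi - Real.arcsin ((k - (s:ℂ)).im / ‖k - (s:ℂ)‖) - Real.pi
        = -(Real.arcsin (k.im / u)) := by rw [him, ← hu]; ring_nf
    rw [heq, abs_neg]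
    calc |Real.arcsin (k.im / u)| ≤ Real.pi / 2 * |k.im / u| := h3
      _ ≤ Real.pi / 2 * (2 * r / s) := by gcongr
      _ = Real.pi * r / s := by ring
  have habs := Complex.norm_le_abs_re_add_abs_im
    (log0 (k - s) - ((Real.log s : ℂ) + Real.pi * Complex.I))
  rw [f_re, f_im] at habs
  have hπ : Real.pi ≤ 4 := by linarith [Real.pi_le_four]
  calc ‖log0 (k - s) - ((Real.log s : ℂ) + Real.pi * Complex.I)‖
      ≤ |Real.log u - Real.log s| + |arg0 (k - s) - Real.pi| := habs
    _ ≤ 2 * r / s + Real.pi * r / s := by linarith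
    _ = (2 + Real.pi) * (r / s) := by ring
    _ ≤ 6 * (r / s) :=
        mul_le_mul_of_nonneg_right (by linarith) (by positivity)
    _ = 6 * r / s := by ring

lemma pointwise_near (k : ℂ) {s : ℝ} (hs0 : 0 < s) :
    ‖log0 (k - s) - ((Real.log s : ℂ) + Real.pi * Complex.I)‖
      ≤ |Real.log (‖k - s‖)| + |Real.log s| + Real.pi := by
  have habs := Complex.norm_le_abs_re_add_abs_im
    (log0 (k - s) - ((Real.log s : ℂ) + Real.pi * Complex.I))
  rw [f_re, f_im] at habs
  have h1 : |arg0 (k - s) - Real.pi| ≤ Real.pi := by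
    rw [abs_le]
    constructor
    · linarith [arg0_nonneg (k - s)]
    · linarith [arg0_lt_two_pi (k - s)]
  have h2 : |Real.log (‖k - s‖) - Real.log s|
      ≤ |Real.log (‖k - s‖)| + |Real.log s| := abs_sub _ _
  linarith

/-- The integrand of the difference `χ(k) − χ(0)`. -/
noncomputable def Ff (g : ℝ → ℝ) (k : ℂ) (s : ℝ) : ℂ :=
  (log0 (k - s) - ((Real.log s : ℂ) + Real.pi * Complex.I)) * (g s : ℂ)

lemma measurable_log0 : Measurable log0 := by
  have m1 : Measurable arg0 := by
    unfold arg0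
    exact Measurable.ite (measurableSet_le measurable_const Complex.measurable_arg)
      Complex.measurable_arg (Complex.measurable_arg.add_const _)
  unfold log0
  exact (Complex.measurable_ofReal.comp
      (Real.measurable_log.comp continuous_norm.measurable)).add
    ((Complex.measurable_ofReal.comp m1).mul_const Complex.I)

lemma Ff_meas {g : ℝ → ℝ} (k : ℂ) {S : Set ℝ}
    (hg : AEStronglyMeasurable g (volume.restrict S)) :
    AEStronglyMeasurable (Ff g k) (volume.restrict S) := by
  unfold Ff
  refine AEStronglyMeasurable.mul ?_ (Complex.continuous_ofReal.comp_aestronglyMeasurable hg)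
  refine Measurable.aestronglyMeasurable ?_
  exact (measurable_log0.comp (measurable_const.sub Complex.measurable_ofReal)).sub
    ((Complex.measurable_ofReal.comp Real.measurable_log).add_const _)

lemma Ff_norm (g : ℝ → ℝ) (k : ℂ) (s : ℝ) :
    ‖Ff g k s‖ = ‖log0 (k - s) - ((Real.log s : ℂ) + Real.pi * Complex.I)‖ * |g s| := by
  unfold Ff
  rw [norm_mul, Complex.norm_real, Real.norm_eq_abs]

lemma log_le_two_sqrt {x : ℝ} (hx : 0 < x) : Real.log x ≤ 2 * Real.sqrt x := by
  have h1 : Real.log (Real.sqrt x) ≤ Real.sqrt x - 1 :=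
    Real.log_le_sub_one_of_pos (Real.sqrt_pos.2 hx)
  rw [Real.log_sqrt hx.le] at h1
  nlinarith [Real.sqrt_nonneg x]

lemma rpow_int_Ioc {ε : ℝ} (hε : 0 < ε) :
    IntegrableOn (fun s : ℝ => s ^ (-(1/2) : ℝ)) (Set.Ioc 0 ε) := by
  have h := intervalIntegral.intervalIntegrable_rpow' (a := 0) (b := ε)
    (r := (-(1/2) : ℝ)) (by norm_num)
  rwa [intervalIntegrable_iff_integrableOn_Ioc_of_le hε.le] at h

lemma rpow_int_val {ε : ℝ} (hε : 0 < ε) :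
    ∫ s in Set.Ioc 0 ε, s ^ (-(1/2) : ℝ) = 2 * Real.sqrt ε := by
  rw [← intervalIntegral.integral_of_le hε.le,
    integral_rpow (Or.inl (by norm_num))]
  rw [Real.zero_rpow (by norm_num), Real.sqrt_eq_rpow]
  norm_num
  ring

lemma one_div_int_Ioc {ε : ℝ} (hε : 0 < ε) :
    IntegrableOn (fun s : ℝ => 1 / s) (Set.Ioc ε 1) := by
  have : ContinuousOn (fun s : ℝ => 1 / s) (Set.Icc ε 1) := by
    apply ContinuousOn.div continuousOn_const continuousOn_id
    intro x hx; exact (lt_of_lt_of_le hε hx.1).ne'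
  exact (this.integrableOn_Icc).mono_set Set.Ioc_subset_Icc_self

lemma one_div_int_val {ε : ℝ} (hε : 0 < ε) (hε1 : ε ≤ 1) :
    ∫ s in Set.Ioc ε 1, 1 / s = -Real.log ε := by
  rw [← intervalIntegral.integral_of_le hε1, integral_one_div]
  · rw [Real.log_div one_ne_zero hε.ne']; simp
  · rw [Set.uIcc_of_le hε1]
    intro hmem
    exact absurd hmem.1 (by linarith)

lemma setint_const_Ioc (c : ℝ) {a b : ℝ} (hab : a ≤ b) :
    ∫ _ in Set.Ioc a b, c = (b - a) * c := by
  rw [setIntegral_const, Real.volume_real_Ioc, max_eq_left (by linarith), smul_eq_mul]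

set_option maxHeartbeats 1000000 in
/-- Non-tangential Hölder-type estimate for the Cauchy-type integral. -/
theorem chi_nontangential_estimate
    (h g : ℝ → ℝ)
    (hderiv : ∀ s ∈ Set.Ici (0:ℝ), HasDerivAt h (g s) s)
    (hcont : ContinuousOn g (Set.Ici (0:ℝ)))
    (M : ℝ) (hbd : ∀ s ∈ Set.Ici (0:ℝ), |g s| ≤ M)
    (hint : IntegrableOn g (Set.Ici (0:ℝ)))
    (χ : ℂ → ℂ)
    (hχ : ∀ k : ℂ, (k.im ≠ 0 ∨ k.re < 0) →
      χ k = (1 / (2 * Real.pi * Complex.I)) *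
        ∫ s in Set.Ioi (0:ℝ), log0 (k - (s : ℂ)) * (g s : ℂ))
    (χ0 : ℂ)
    (hχ0 : χ0 = (1 / (2 * Real.pi * Complex.I)) *
      ∫ s in Set.Ioi (0:ℝ), ((Real.log s : ℂ) + Real.pi * Complex.I) * (g s : ℂ)) :
    ∀ θ₀ ∈ Set.Ioo (0:ℝ) Real.pi, ∃ C : ℝ, 0 < C ∧
      ∀ k : ℂ, 0 < ‖k‖ → ‖k‖ ≤ 1/4 →
        θ₀ ≤ arg0 k → arg0 k ≤ 2 * Real.pi - θ₀ →
        ‖χ k - χ0‖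
          ≤ C * ‖k‖ * (1 + |Real.log (‖k‖)|) := by
  rintro θ₀ ⟨hθ1, hθ2⟩
  have hM : 0 ≤ M := le_trans (abs_nonneg _) (hbd 0 (Set.mem_Ici.2 le_rfl))
  set G := ∫ s in Set.Ici (0:ℝ), |g s| with hGdef
  have hG0 : 0 ≤ G := setIntegral_nonneg measurableSet_Ici (fun s _ => abs_nonneg _)
  have hGint : IntegrableOn (fun s => |g s|) (Set.Ici (0:ℝ)) := hint.abs
  have hsinpos : 0 < Real.sin θ₀ := Real.sin_pos_of_pos_of_lt_pi hθ1 hθ2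
  set C₁ := Real.log 3 + |Real.log (Real.sin θ₀)| with hC₁def
  have hC₁0 : 0 ≤ C₁ := add_nonneg (Real.log_nonneg (by norm_num)) (abs_nonneg _)
  have hπ := Real.pi_pos
  refine ⟨2*M*(C₁ + 2*Real.pi + 6) + 6*M + 6*G + 1, by positivity, ?_⟩
  intro k hk1 hk2 h1 h2
  -- basic notation
  set r := ‖k‖ with hrdef
  set L := |Real.log r| with hLdef
  have hL0 : 0 ≤ L := abs_nonneg _
  set ε := 2*r with hεdef
  have hε : 0 < ε := by positivity
  have hε1 : ε ≤ 1 := by rw [hεdef]; linarith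
  have hεhalf : ε ≤ 1/2 := by rw [hεdef]; linarith
  have hlogε : -Real.log ε ≤ L := by
    rw [hεdef, Real.log_mul two_ne_zero (ne_of_gt hk1)]
    have h2' : (0:ℝ) ≤ Real.log 2 := Real.log_nonneg (by norm_num)
    have h3' := neg_le_abs (Real.log r)
    rw [hLdef]; linarith
  have hlogεneg : Real.log ε ≤ 0 := Real.log_nonpos hε.le hε1
  set K₂ := L + C₁ + Real.pi - Real.log ε with hK₂def
  have hK₂0 : 0 ≤ K₂ := by rw [hK₂def]; linarith
  -- the domain hypothesis holds for k
  have hdom : k.im ≠ 0 ∨ k.re < 0 := region_domain hθ1 hk1 h1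
  -- |log |k - s|| control on (0, ε]
  have hlogu : ∀ s ∈ Set.Ioc (0:ℝ) ε, |Real.log (‖k - s‖)| ≤ L + C₁ := by
    intro s hs
    have hs0 : 0 < s := hs.1
    have hsand := abs_sandwich (k := k) hs0
    rw [abs_le] at hsand
    have hu2 : ‖k - s‖ ≤ 3 * r := by
      have h3 := hs.2
      rw [hεdef] at h3
      linarith [hsand.2]
    have hu1 : Real.sin θ₀ * r ≤ ‖k - s‖ :=
      dist_lower hθ1 hθ2 hk1 h1 h2 hs0.le
    have hu0 : 0 < ‖k - s‖ := lt_of_lt_of_le (by positivity) hu1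
    rw [abs_le]
    constructor
    · have hlow : Real.log (Real.sin θ₀ * r) ≤ Real.log (‖k - s‖) :=
        Real.log_le_log (by positivity) hu1
      rw [Real.log_mul hsinpos.ne' hk1.ne'] at hlow
      have ha1 := neg_abs_le (Real.log (Real.sin θ₀))
      have ha2 := neg_abs_le (Real.log r)
      have hlog3 : (0:ℝ) ≤ Real.log 3 := Real.log_nonneg (by norm_num)
      rw [hC₁def, hLdef]
      linarith
    · have hhigh : Real.log (‖k - s‖) ≤ Real.log (3 * r) :=
        Real.log_le_log hu0 hu2
      rw [Real.log_mul (by norm_num) hk1.ne'] at hhigh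
      have ha2 := le_abs_self (Real.log r)
      have ha3 : (0:ℝ) ≤ |Real.log (Real.sin θ₀)| := abs_nonneg _
      rw [hC₁def, hLdef]
      linarith
  -- pointwise bound on (0, ε]
  have hb1 : ∀ s ∈ Set.Ioc (0:ℝ) ε,
      ‖Ff g k s‖ ≤ M * K₂ + (M * (2 * Real.sqrt ε)) * s ^ (-(1/2) : ℝ) := by
    intro s hs
    have hs0 : 0 < s := hs.1
    rw [Ff_norm]
    have hf1 := pointwise_near k hs0
    have hf2 := hlogu s hs
    have hlogs : |Real.log s| = - Real.log s :=
      _root_.abs_of_nonpos (Real.log_nonpos hs0.le (le_trans hs.2 hε1))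
    have hlogratio : Real.log ε - Real.log s ≤ 2 * Real.sqrt ε * s ^ (-(1/2) : ℝ) := by
      rw [show Real.log ε - Real.log s = Real.log (ε / s) from
        (Real.log_div hε.ne' hs0.ne').symm]
      have := log_le_two_sqrt (x := ε / s) (by positivity)
      rw [Real.sqrt_div hε.le] at this
      have hrw : s ^ (-(1/2) : ℝ) = (Real.sqrt s)⁻¹ := by
        rw [Real.rpow_neg hs0.le, Real.sqrt_eq_rpow]
      rw [hrw]
      calc Real.log (ε / s) ≤ 2 * (Real.sqrt ε / Real.sqrt s) := this
        _ = 2 * Real.sqrt ε * (Real.sqrt s)⁻¹ := by ring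
    have hfbound : ‖log0 (k - s) - ((Real.log s : ℂ) + Real.pi * Complex.I)‖
        ≤ K₂ + 2 * Real.sqrt ε * s ^ (-(1/2) : ℝ) := by
      rw [hK₂def]
      have := hf1
      rw [hlogs] at this
      have hchain : - Real.log s ≤ - Real.log ε + 2 * Real.sqrt ε * s ^ (-(1/2) : ℝ) := by
        linarith
      linarith
    have hgbd : |g s| ≤ M := hbd s (Set.mem_Ici.2 hs0.le)
    calc ‖log0 (k - s) - ((Real.log s : ℂ) + Real.pi * Complex.I)‖ * |g s|
        ≤ (K₂ + 2 * Real.sqrt ε * s ^ (-(1/2) : ℝ)) * M := by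
          apply mul_le_mul hfbound hgbd (abs_nonneg _)
          have : (0:ℝ) ≤ 2 * Real.sqrt ε * s ^ (-(1/2) : ℝ) := by positivity
          linarith
      _ = M * K₂ + (M * (2 * Real.sqrt ε)) * s ^ (-(1/2) : ℝ) := by ring
  -- pointwise bound on (ε, 1]
  have hb2 : ∀ s ∈ Set.Ioc ε (1:ℝ), ‖Ff g k s‖ ≤ (6 * M * r) * (1 / s) := by
    intro s hs
    have hs0 : 0 < s := lt_trans hε hs.1
    rw [Ff_norm]
    have hεs2 : 2 * ‖k‖ ≤ s := by
      rw [← hrdef, ← hεdef]; exact hs.1.le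
    have hf1 := pointwise_far (k := k) (s := s) hk1 hεs2
    have hgbd : |g s| ≤ M := hbd s (Set.mem_Ici.2 hs0.le)
    calc ‖log0 (k - s) - ((Real.log s : ℂ) + Real.pi * Complex.I)‖ * |g s|
        ≤ (6 * r / s) * M := by
          apply mul_le_mul (by rw [← hrdef] at hf1; exact hf1) hgbd (abs_nonneg _)
          positivity
      _ = (6 * M * r) * (1 / s) := by ring
  -- pointwise bound on (1, ∞)
  have hb3 : ∀ s ∈ Set.Ioi (1:ℝ), ‖Ff g k s‖ ≤ (6 * r) * |g s| := by
    intro s hs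
    have hs1 : (1:ℝ) < s := hs
    have hs0 : 0 < s := by linarith
    rw [Ff_norm]
    have hεs : 2 * ‖k‖ ≤ s := by
      rw [← hrdef]
      calc 2 * r = ε := hεdef.symm
        _ ≤ 1 := hε1
        _ ≤ s := hs1.le
    have hf1 := pointwise_far (k := k) hk1 hεs
    rw [← hrdef] at hf1
    have hf2 : 6 * r / s ≤ 6 * r := by
      rw [div_le_iff₀ hs0]
      nlinarith
    apply mul_le_mul (le_trans hf1 hf2) le_rfl (abs_nonneg _) (by positivity)
  -- integrability of the majorants
  have hmaj1 : IntegrableOn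
      (fun s : ℝ => M * K₂ + (M * (2 * Real.sqrt ε)) * s ^ (-(1/2) : ℝ))
      (Set.Ioc 0 ε) := by
    refine Integrable.add ?_ ?_
    · exact integrableOn_const measure_Ioc_lt_top.ne
    · exact (rpow_int_Ioc hε).const_mul _
  have hmaj2 : IntegrableOn (fun s : ℝ => (6 * M * r) * (1 / s)) (Set.Ioc ε 1) :=
    (one_div_int_Ioc hε).const_mul _
  have hmaj3 : IntegrableOn (fun s : ℝ => (6 * r) * |g s|) (Set.Ioi 1) := by
    refine Integrable.const_mul ?_ _
    exact (hint.mono_set (fun x (hx : x ∈ Set.Ioi (1:ℝ)) => le_trans (by norm_num : (0:ℝ) ≤ 1) (le_of_lt hx))).abs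
  -- a.e. measurability of Ff on the pieces
  have hgae : AEStronglyMeasurable g (volume.restrict (Set.Ici (0:ℝ))) :=
    hint.aestronglyMeasurable
  have hgrestrict : ∀ S : Set ℝ, S ⊆ Set.Ici (0:ℝ) →
      AEStronglyMeasurable (Ff g k) (volume.restrict S) := by
    intro S hS
    exact Ff_meas k (hgae.mono_measure (Measure.restrict_mono hS le_rfl))
  have hsub1 : Set.Ioc (0:ℝ) ε ⊆ Set.Ici 0 := fun x hx => hx.1.le
  have hsub2 : Set.Ioc ε (1:ℝ) ⊆ Set.Ici 0 := fun x hx => (lt_trans hε hx.1).le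
  have hsub3 : Set.Ioi (1:ℝ) ⊆ Set.Ici 0 := fun x hx =>
    le_trans (by norm_num : (0:ℝ) ≤ 1) (le_of_lt hx)
  -- integrability of Ff on the pieces
  have hFi1 : IntegrableOn (Ff g k) (Set.Ioc 0 ε) :=
    Integrable.mono' hmaj1 (hgrestrict _ hsub1)
      ((ae_restrict_iff' measurableSet_Ioc).2 (Filter.Eventually.of_forall hb1))
  have hFi2 : IntegrableOn (Ff g k) (Set.Ioc ε 1) :=
    Integrable.mono' hmaj2 (hgrestrict _ hsub2)
      ((ae_restrict_iff' measurableSet_Ioc).2 (Filter.Eventually.of_forall hb2))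
  have hFi3 : IntegrableOn (Ff g k) (Set.Ioi 1) :=
    Integrable.mono' hmaj3 (hgrestrict _ hsub3)
      ((ae_restrict_iff' measurableSet_Ioi).2 (Filter.Eventually.of_forall hb3))
  -- decomposition of the domain
  have hdecomp : Set.Ioi (0:ℝ) = Set.Ioc 0 ε ∪ (Set.Ioc ε 1 ∪ Set.Ioi 1) := by
    rw [Set.Ioc_union_Ioi_eq_Ioi hε1, Set.Ioc_union_Ioi_eq_Ioi hε.le]
  have hFi : IntegrableOn (Ff g k) (Set.Ioi 0) := by
    rw [hdecomp]
    exact (hFi1.union (hFi2.union hFi3))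
  -- the three integral bounds
  have hI1 : ‖∫ s in Set.Ioc (0:ℝ) ε, Ff g k s‖ ≤ M * K₂ * ε + 4 * (M * ε) := by
    calc ‖∫ s in Set.Ioc (0:ℝ) ε, Ff g k s‖
        ≤ ∫ s in Set.Ioc (0:ℝ) ε, ‖Ff g k s‖ := norm_integral_le_integral_norm _
      _ ≤ ∫ s in Set.Ioc (0:ℝ) ε,
            (M * K₂ + (M * (2 * Real.sqrt ε)) * s ^ (-(1/2) : ℝ)) := by
          refine integral_mono_of_nonneg
            (Filter.Eventually.of_forall (fun s => norm_nonneg _)) hmaj1 ?_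
          exact (ae_restrict_iff' measurableSet_Ioc).2 (Filter.Eventually.of_forall hb1)
      _ = M * K₂ * ε + 4 * (M * ε) := by
          rw [integral_add (f := fun _ : ℝ => M * K₂) (μ := volume.restrict (Set.Ioc 0 ε))
              (integrableOn_const measure_Ioc_lt_top.ne)
            ((rpow_int_Ioc hε).const_mul _)]
          rw [setint_const_Ioc _ hε.le, integral_const_mul, rpow_int_val hε]
          have hss : Real.sqrt ε * Real.sqrt ε = ε := Real.mul_self_sqrt hε.le
          nlinarith
  have hI2 : ‖∫ s in Set.Ioc ε (1:ℝ), Ff g k s‖ ≤ (6 * M * r) * L := by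
    calc ‖∫ s in Set.Ioc ε (1:ℝ), Ff g k s‖
        ≤ ∫ s in Set.Ioc ε (1:ℝ), ‖Ff g k s‖ := norm_integral_le_integral_norm _
      _ ≤ ∫ s in Set.Ioc ε (1:ℝ), (6 * M * r) * (1 / s) := by
          refine integral_mono_of_nonneg
            (Filter.Eventually.of_forall (fun s => norm_nonneg _)) hmaj2 ?_
          exact (ae_restrict_iff' measurableSet_Ioc).2 (Filter.Eventually.of_forall hb2)
      _ = (6 * M * r) * (- Real.log ε) := by
          rw [integral_const_mul, one_div_int_val hε hε1]
      _ ≤ (6 * M * r) * L := by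
          apply mul_le_mul_of_nonneg_left hlogε (by positivity)
  have hI3 : ‖∫ s in Set.Ioi (1:ℝ), Ff g k s‖ ≤ (6 * r) * G := by
    calc ‖∫ s in Set.Ioi (1:ℝ), Ff g k s‖
        ≤ ∫ s in Set.Ioi (1:ℝ), ‖Ff g k s‖ := norm_integral_le_integral_norm _
      _ ≤ ∫ s in Set.Ioi (1:ℝ), (6 * r) * |g s| := by
          refine integral_mono_of_nonneg
            (Filter.Eventually.of_forall (fun s => norm_nonneg _)) hmaj3 ?_
          exact (ae_restrict_iff' measurableSet_Ioi).2 (Filter.Eventually.of_forall hb3)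
      _ = (6 * r) * ∫ s in Set.Ioi (1:ℝ), |g s| := integral_const_mul _ _
      _ ≤ (6 * r) * G := by
          rw [hGdef]
          apply mul_le_mul_of_nonneg_left ?_ (by positivity)
          apply setIntegral_mono_set hGint
            (Filter.Eventually.of_forall (fun s => abs_nonneg _))
            (HasSubset.Subset.eventuallyLE hsub3)
  -- splitting of the integral of Ff
  have hdisj1 : Disjoint (Set.Ioc (0:ℝ) ε) (Set.Ioc ε 1 ∪ Set.Ioi 1) := by
    rw [Set.Ioc_union_Ioi_eq_Ioi hε1]
    exact Set.Ioc_disjoint_Ioi le_rfl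
  have hdisj2 : Disjoint (Set.Ioc ε (1:ℝ)) (Set.Ioi 1) := Set.Ioc_disjoint_Ioi le_rfl
  have hsplit : ∫ s in Set.Ioi (0:ℝ), Ff g k s
      = (∫ s in Set.Ioc (0:ℝ) ε, Ff g k s)
        + ((∫ s in Set.Ioc ε (1:ℝ), Ff g k s) + (∫ s in Set.Ioi (1:ℝ), Ff g k s)) := by
    rw [hdecomp, setIntegral_union hdisj1 (measurableSet_Ioc.union measurableSet_Ioi)
      hFi1 (hFi2.union hFi3),
      setIntegral_union hdisj2 measurableSet_Ioi hFi2 hFi3]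
  -- total bound on the integral of Ff
  have htotal : ‖∫ s in Set.Ioi (0:ℝ), Ff g k s‖
      ≤ (2*M*(C₁ + 2*Real.pi + 6) + 6*M + 6*G) * (r * (1 + L)) := by
    have hT : ‖∫ s in Set.Ioi (0:ℝ), Ff g k s‖
        ≤ (M * K₂ * ε + 4 * (M * ε)) + ((6 * M * r) * L + (6 * r) * G) := by
      rw [hsplit]
      calc ‖(∫ s in Set.Ioc (0:ℝ) ε, Ff g k s)
            + ((∫ s in Set.Ioc ε (1:ℝ), Ff g k s) + (∫ s in Set.Ioi (1:ℝ), Ff g k s))‖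
          ≤ ‖∫ s in Set.Ioc (0:ℝ) ε, Ff g k s‖
            + (‖∫ s in Set.Ioc ε (1:ℝ), Ff g k s‖ + ‖∫ s in Set.Ioi (1:ℝ), Ff g k s‖) :=
            le_trans (norm_add_le _ _) (by gcongr; exact norm_add_le _ _)
        _ ≤ (M * K₂ * ε + 4 * (M * ε)) + ((6 * M * r) * L + (6 * r) * G) := by
            gcongr
    have hK₂le : K₂ ≤ 2*L + C₁ + Real.pi := by
      rw [hK₂def]; linarith
    have hMr : (0:ℝ) ≤ M * r := mul_nonneg hM hk1.le
    have hMrL : (0:ℝ) ≤ M * r * L := mul_nonneg hMr hL0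
    have hMrC : (0:ℝ) ≤ M * r * C₁ := mul_nonneg hMr hC₁0
    have hMrLC : (0:ℝ) ≤ M * r * L * C₁ := mul_nonneg hMrL hC₁0
    have hGr : (0:ℝ) ≤ G * r := mul_nonneg hG0 hk1.le
    have hGrL : (0:ℝ) ≤ G * r * L := mul_nonneg hGr hL0
    have hMrLpi : (0:ℝ) ≤ M * r * L * Real.pi := mul_nonneg hMrL hπ.le
    have he1 : M * K₂ * ε ≤ 2 * (M * r) * (2*L + C₁ + Real.pi) := by
      rw [hεdef]
      have h5 := mul_le_mul_of_nonneg_left hK₂le hM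
      calc M * K₂ * (2*r) ≤ M * (2*L + C₁ + Real.pi) * (2*r) :=
            mul_le_mul_of_nonneg_right h5 (by linarith)
        _ = 2 * (M * r) * (2*L + C₁ + Real.pi) := by ring
    have hq : (2*L + C₁ + Real.pi + 4) ≤ (C₁ + 2*Real.pi + 6) * (1+L) := by
      nlinarith [mul_nonneg hC₁0 hL0, mul_nonneg hπ.le hL0]
    calc ‖∫ s in Set.Ioi (0:ℝ), Ff g k s‖
        ≤ (M * K₂ * ε + 4 * (M * ε)) + ((6 * M * r) * L + (6 * r) * G) := hT
      _ ≤ (2*(M*r)*(2*L+C₁+Real.pi) + 8*(M*r)) + ((6*M*r)*L + 6*r*G) := by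
          have he2 : 4*(M*ε) = 8*(M*r) := by rw [hεdef]; ring
          linarith [he1]
      _ = 2*(M*r)*(2*L+C₁+Real.pi+4) + ((6*M*r)*L + (6*r)*(G*1)) := by ring
      _ ≤ 2*(M*r)*((C₁+2*Real.pi+6)*(1+L))
            + ((6*M*r)*(1+L) + (6*r)*(G*(1+L))) := by
          refine add_le_add (mul_le_mul_of_nonneg_left hq (by linarith)) (add_le_add ?_ ?_)
          · exact mul_le_mul_of_nonneg_left (by linarith) (by linarith)
          · refine mul_le_mul_of_nonneg_left ?_ (by linarith)
            have : (0:ℝ) ≤ G * L := mul_nonneg hG0 hL0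
            nlinarith
      _ = (2*M*(C₁ + 2*Real.pi + 6) + 6*M + 6*G) * (r * (1 + L)) := by ring
  -- the prefactor has absolute value at most 1
  have hc1 : ‖1 / (2 * (Real.pi:ℂ) * Complex.I)‖ ≤ 1 := by
    rw [norm_div, norm_one, norm_mul, norm_mul, Complex.norm_I, Complex.norm_two,
      Complex.norm_real, Real.norm_eq_abs, _root_.abs_of_pos hπ]
    rw [div_le_one (by nlinarith [Real.pi_gt_three])]
    nlinarith [Real.pi_gt_three]
  -- final assembly, splitting on integrability of the χ0-integrand
  have hrw := hχ k hdom
  by_cases hB : IntegrableOn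
      (fun s : ℝ => ((Real.log s : ℂ) + Real.pi * Complex.I) * (g s:ℂ)) (Set.Ioi 0)
  · have hABfun : (fun s : ℝ => log0 (k - s) * (g s:ℂ))
        = fun s => Ff g k s + ((Real.log s : ℂ) + Real.pi * Complex.I) * (g s : ℂ) :=
      funext fun s => by unfold Ff; ring
    have hkey : (∫ s in Set.Ioi (0:ℝ), log0 (k - (s:ℂ)) * (g s : ℂ))
        - (∫ s in Set.Ioi (0:ℝ), ((Real.log s : ℂ) + Real.pi * Complex.I) * (g s : ℂ))
        = ∫ s in Set.Ioi (0:ℝ), Ff g k s := by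
      rw [hABfun, integral_add hFi hB]
      ring
    have hfinal : ‖χ k - χ0‖
        = ‖1 / (2 * (Real.pi:ℂ) * Complex.I)‖
          * ‖∫ s in Set.Ioi (0:ℝ), Ff g k s‖ := by
      rw [hrw, hχ0, ← mul_sub, norm_mul, hkey]
    rw [hfinal]
    have h9 : ‖∫ s in Set.Ioi (0:ℝ), Ff g k s‖
        = ‖∫ s in Set.Ioi (0:ℝ), Ff g k s‖ := rfl
    calc ‖1 / (2 * (Real.pi:ℂ) * Complex.I)‖
          * ‖∫ s in Set.Ioi (0:ℝ), Ff g k s‖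
        ≤ 1 * ‖∫ s in Set.Ioi (0:ℝ), Ff g k s‖ := by
          apply mul_le_mul_of_nonneg_right hc1 (norm_nonneg _)
      _ = ‖∫ s in Set.Ioi (0:ℝ), Ff g k s‖ := by rw [one_mul]
      _ ≤ (2*M*(C₁ + 2*Real.pi + 6) + 6*M + 6*G) * (r * (1 + L)) := htotal
      _ ≤ (2*M*(C₁ + 2*Real.pi + 6) + 6*M + 6*G + 1) * r * (1 + L) := by
          have hr1L : (0:ℝ) ≤ r * (1 + L) := by positivity
          linarith [hr1L]
  · have hA : ¬ IntegrableOn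
        (fun s : ℝ => log0 (k - (s:ℂ)) * (g s:ℂ)) (Set.Ioi 0) := by
      intro hA
      apply hB
      have hBfun : (fun s : ℝ => ((Real.log s : ℂ) + Real.pi * Complex.I) * (g s : ℂ))
          = fun s : ℝ => (log0 (k - (s:ℂ)) * (g s:ℂ)) - Ff g k s :=
        funext fun s => by unfold Ff; ring
      rw [hBfun]
      exact hA.sub hFi
    rw [hrw, hχ0, integral_undef hA, integral_undef hB]
    simp only [mul_zero, sub_zero, sub_self, norm_zero]
    have hfac : (0:ℝ) ≤ 2*M*(C₁ + 2*Real.pi + 6) + 6*M + 6*G + 1 := by nlinarith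
    positivity
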